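/- Call a set B ⊆ ℕ primitive if for all b, b' ∈ B, b ∣ b' implies b = b'. Let (e_i)_{i≥1} be a sequence of distinct natural numbers such that the set E = {e_i : i ≥ 1} is primitive, and let (A_i)_{i≥1} be pairwise disjoint sets of primes such that every p ∈ A_i satisfies p > e_j for all j ≤ i and p > e_i. Suppose moreover each A_i consists of primes congruent to 2^i + 1 modulo 2^{i+1} (so the A_i are automatically disjoint) and min A_i > max{e_1,…,e_i}. Then the set B = ⋃_{i≥1} e_i·A_i = {e_i·p : i ≥ 1, p ∈ A_i} is primitive. -/
import Mathlib


/-- A set `B ⊆ ℕ` is primitive if `b ∣ b'` for `b, b' ∈ B` implies `b = b'`. -/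
def Primitive (B : Set ℕ) : Prop := ∀ b ∈ B, ∀ b' ∈ B, b ∣ b' → b = b'

/-- If `(e_i)_{i≥1}` are distinct positive naturals forming a primitive set, and the
`A_i` are sets of primes congruent to `2^i + 1` mod `2^(i+1)` (hence pairwise disjoint),
every `p ∈ A_i` exceeding every `e_j` with `j ≤ i`, then
`B = ⋃_{i≥1} e_i·A_i` is primitive. -/
theorem union_rescaled_primes_primitive (e : ℕ → ℕ) (A : ℕ → Set ℕ)
    (hpos : ∀ i, 1 ≤ i → 1 ≤ e i)
    (hinj : Function.Injective e)
    (hE : Primitive {n | ∃ i, 1 ≤ i ∧ e i = n})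
    (hprime : ∀ i, 1 ≤ i → ∀ p ∈ A i, Nat.Prime p)
    (hcong : ∀ i, 1 ≤ i → ∀ p ∈ A i, p % 2 ^ (i + 1) = (2 ^ i + 1) % 2 ^ (i + 1))
    (hgt : ∀ i, 1 ≤ i → ∀ p ∈ A i, ∀ j, 1 ≤ j → j ≤ i → e j < p) :
    Primitive {n | ∃ i, 1 ≤ i ∧ ∃ p ∈ A i, n = e i * p} := by
  rintro b ⟨i, hi, p, hp, rfl⟩ b' ⟨j, hj, q, hq, rfl⟩ hdvd
  have hpp := hprime i hi p hp
  have hqp := hprime j hj q hq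
  have heip : e i < p := hgt i hi p hp i hi le_rfl
  have hejq : e j < q := hgt j hj q hq j hj le_rfl
  by_cases hpq : p = q
  · subst hpq
    have hdvd' : e i ∣ e j := (Nat.mul_dvd_mul_iff_right hpp.pos).mp hdvd
    have := hE (e i) ⟨i, hi, rfl⟩ (e j) ⟨j, hj, rfl⟩ hdvd'
    rw [this]
  · exfalso
    have hpdvd : p ∣ e j * q := dvd_trans (dvd_mul_left p (e i)) hdvd
    have hcop : Nat.Coprime p q := (Nat.coprime_primes hpp hqp).mpr hpq
    have hpe : p ∣ e j := hcop.dvd_of_dvd_mul_right hpdvd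
    obtain ⟨m, hm⟩ := hpe
    have h1 : e i ∣ m * q := by
      have h2 : p * e i ∣ p * (m * q) := by
        rw [mul_comm p (e i)]
        calc e i * p ∣ e j * q := hdvd
          _ = p * (m * q) := by rw [hm]; ring
      exact (Nat.mul_dvd_mul_iff_left hpp.pos).mp h2
    have hqei : ¬ q ∣ e i := by
      intro h
      have : q ≤ e i := Nat.le_of_dvd (hpos i hi) h
      have hpej : p ≤ e j := Nat.le_of_dvd (by have := hpos j hj; omega) ⟨m, hm⟩
      have h5 : q < p := lt_of_le_of_lt this heip
      have h6 : p < q := lt_of_le_of_lt hpej hejq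
      exact lt_asymm h5 h6
    have hcop2 : Nat.Coprime (e i) q := (Nat.coprime_comm.mp ((hqp.coprime_iff_not_dvd).mpr hqei))
    have h3 : e i ∣ m := hcop2.dvd_of_dvd_mul_right h1
    have h4 : e i ∣ e j := h3.trans ⟨p, by rw [hm]; ring⟩
    have heq : e i = e j := hE (e i) ⟨i, hi, rfl⟩ (e j) ⟨j, hj, rfl⟩ h4
    have hpei : p ≤ e i := Nat.le_of_dvd (by have := hpos i hi; omega) (heq ▸ ⟨m, hm⟩)
    omega
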